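/- Let Z be a nonempty (X_D,M)-safely reachable zone and let 𝔾 be its canonical distance graph. Then: (1) for all x ∈ X_H, 𝔾_{x0} = (≤,-∞) or 𝔾_{0x} ≤ (<,+∞); (2) for all x,y ∈ X, if 𝔾_{xy} = (≤,-∞) then 𝔾_{x0} = (≤,-∞) or 𝔾_{0y} = (≤,-∞). -/

import Mathlib

noncomputable section

open Classical

attribute [local instance] Classical.propDecidable

namespace GTA

/-- A comparison operator: strict `<` or non-strict `≤`. -/
inductive Cmp where
  | lt : Cmp
  | le : Cmp
deriving DecidableEq

/-- `Cmp.holds ◁ a b` means `a ◁ b` in `ℝ̄ = EReal`. -/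
def Cmp.holds : Cmp → EReal → EReal → Prop
  | .lt, a, b => a < b
  | .le, a, b => a ≤ b

/-- Extended addition on `ℝ̄`: `(+∞) + α = α + (+∞) = +∞` for all `α`,
and `(-∞) + β = β + (-∞) = -∞` for `β ≠ +∞`. -/
def eadd (a b : EReal) : EReal := if a = ⊤ ∨ b = ⊤ then ⊤ else a + b

/-- Extended subtraction `β - α := β + (-α)`. -/
def esub (a b : EReal) : EReal := eadd a (-b)

/-- Constants of atomic constraints: elements of `ℤ ∪ {-∞, +∞}`. -/
inductive EConst where
  | ninf : EConst
  | int : ℤ → EConst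
  | pinf : EConst
deriving DecidableEq

def EConst.toEReal : EConst → EReal
  | .ninf => ⊥
  | .int k => ((k : ℝ) : EReal)
  | .pinf => ⊤

variable {C : Type*}

/-- A valuation over the clock set `C` (vertices `Option C`, where `none` is the
special clock `0`), with future clocks `XF` and history clocks the complement of `XF`:
`v 0 = 0`, history clocks take values in `[0, +∞]`, future clocks in `[-∞, 0]`. -/
structure Val (C : Type*) (XF : Set C) where
  toFun : Option C → EReal
  zero' : toFun none = 0
  hist' : ∀ x : C, x ∉ XF → 0 ≤ toFun (some x)
  fut' : ∀ x : C, x ∈ XF → toFun (some x) ≤ 0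

/-- Shift of a clock map by a real delay `δ`: every clock in `X` increases by `δ`,
the special clock `0` keeps value `0`. -/
def shift (u : Option C → EReal) (δ : ℝ) : Option C → EReal
  | none => 0
  | some x => eadd (u (some x)) ((δ : ℝ) : EReal)

/-- An atomic constraint `y - x ◁ c` with `x, y ∈ X ∪ {0}` and `c ∈ ℤ ∪ {-∞,+∞}`. -/
structure Atom (C : Type*) where
  y : Option C
  x : Option C
  cmp : Cmp
  c : EConst

/-- Satisfaction `u ⊨ y - x ◁ c`, i.e. `u(y) - u(x) ◁ c` with extended subtraction. -/
def asat (u : Option C → EReal) (φ : Atom C) : Prop :=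
  φ.cmp.holds (esub (u φ.y) (u φ.x)) φ.c.toEReal

/-- The simulation preorder `≼_G` on clock maps: for every `φ ∈ G` and every real
`δ ≥ 0`, `u + δ ⊨ φ` implies `u' + δ ⊨ φ`. -/
def simLeFun (G : Set (Atom C)) (u u' : Option C → EReal) : Prop :=
  ∀ φ ∈ G, ∀ δ : ℝ, 0 ≤ δ → asat (shift u δ) φ → asat (shift u' δ) φ

/-- `v ≼_G v'` on valuations. -/
def simLe (XF : Set C) (G : Set (Atom C)) (v v' : Val C XF) : Prop :=
  simLeFun G v.toFun v'.toFun

/-- `v' ∈ [R]v`: history clocks in `R` are reset to `0`, future clocks in `R` are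
released (any value in `[-∞,0]`, automatic for valuations), other clocks unchanged. -/
def releaseRel (XF : Set C) (R : Set C) (v v' : Val C XF) : Prop :=
  (∀ x ∈ R, x ∉ XF → v'.toFun (some x) = 0) ∧
  ∀ x : C, x ∉ R → v'.toFun (some x) = v.toFun (some x)

/-- `[R]Z`. -/
def changeSet (XF : Set C) (R : Set C) (Z : Set (Val C XF)) : Set (Val C XF) :=
  { v' | ∃ v ∈ Z, releaseRel XF R v v' }

/-- Time elapse `↑Z = {v + δ : v ∈ Z, δ ≥ 0, (v+δ)(x) ≤ 0 for all future x}`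
(the latter condition is automatic since elements are valuations). -/
def elapseSet (XF : Set C) (Z : Set (Val C XF)) : Set (Val C XF) :=
  { w | ∃ v ∈ Z, ∃ δ : ℝ, 0 ≤ δ ∧ w.toFun = shift v.toFun δ }

/-- Membership of a vertex in a set of clocks (the clock `0` is in no such set). -/
def inR (R : Set C) : Option C → Prop
  | none => False
  | some x => x ∈ R

/-- `pre([R])(G)`. -/
def preChange (R : Set C) (G : Set (Atom C)) : Set (Atom C) :=
  { ψ | ∃ φ ∈ G,
      (¬ inR R φ.x ∧ ¬ inR R φ.y ∧ ψ = φ) ∨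
      (inR R φ.x ∧ ¬ inR R φ.y ∧ ψ = { φ with x := none }) ∨
      (¬ inR R φ.x ∧ inR R φ.y ∧ ψ = { φ with y := none }) }

/-- Instantaneous timed programs: guards (finite conjunctions of atomic constraints),
changes `[R]`, and sequential composition. -/
inductive Prog (C : Type*) where
  | guard : List (Atom C) → Prog C
  | change : Set C → Prog C
  | seq : Prog C → Prog C → Prog C

/-- Semantics `v →prog v'` of programs. -/
def Prog.steps (XF : Set C) : Prog C → Val C XF → Val C XF → Prop
  | .guard g, v, v' => (∀ φ ∈ g, asat v.toFun φ) ∧ v' = v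
  | .change R, v, v' => releaseRel XF R v v'
  | .seq p q, v, v' => ∃ u, Prog.steps XF p v u ∧ Prog.steps XF q u v'

/-- `pre(prog)(G)`. -/
def Prog.pre : Prog C → Set (Atom C) → Set (Atom C)
  | .guard g, G => { φ | φ ∈ g } ∪ G
  | .change R, G => preChange R G
  | .seq p q, G => Prog.pre p (Prog.pre q G)

/-- A weight `(◁, c)` with `c ∈ ℝ̄`. -/
structure Weight where
  cmp : Cmp
  c : EReal

/-- Strict order on weights. -/
def Weight.lt (w w' : Weight) : Prop :=
  w.c < w'.c ∨ (w.c = w'.c ∧ w.cmp = Cmp.lt ∧ w'.cmp = Cmp.le)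

/-- Non-strict order on weights. -/
def Weight.le (w w' : Weight) : Prop := Weight.lt w w' ∨ w = w'

/-- Sum of weights. -/
def Weight.add (w w' : Weight) : Weight :=
  if w = ⟨Cmp.lt, ⊥⟩ ∨ w' = ⟨Cmp.lt, ⊥⟩ then ⟨Cmp.lt, ⊥⟩
  else if w = ⟨Cmp.le, ⊤⟩ ∨ w' = ⟨Cmp.le, ⊤⟩ then ⟨Cmp.le, ⊤⟩
  else if w = ⟨Cmp.le, ⊥⟩ ∨ w' = ⟨Cmp.le, ⊥⟩ then ⟨Cmp.le, ⊥⟩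
  else if w = ⟨Cmp.lt, ⊤⟩ ∨ w' = ⟨Cmp.lt, ⊤⟩ then ⟨Cmp.lt, ⊤⟩
  else ⟨if w.cmp = Cmp.le ∧ w'.cmp = Cmp.le then Cmp.le else Cmp.lt, w.c + w'.c⟩

/-- Minimum of two weights. -/
def Weight.min (w w' : Weight) : Weight := if Weight.le w w' then w else w'

/-- A weight `(◁, c)` is finite if `c ∈ ℝ`. -/
def Weight.Finite (w : Weight) : Prop := w.c ≠ ⊥ ∧ w.c ≠ ⊤

/-- A distance graph: a weight on each ordered pair of distinct vertices of
`X ∪ {0}`; self-loops carry the trivial weight `(≤, +∞)`. -/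
structure DGraph (C : Type*) where
  w : Option C → Option C → Weight
  refl' : ∀ a : Option C, w a a = ⟨Cmp.le, ⊤⟩

namespace DGraph

/-- A well-formed distance graph has no edge of weight `(<, -∞)`. -/
def WF (G : DGraph C) : Prop := ∀ a b, G.w a b ≠ ⟨Cmp.lt, ⊥⟩

/-- The semantics `⟦𝔾⟧` of a distance graph. -/
def sem (G : DGraph C) (XF : Set C) : Set (Val C XF) :=
  { v | ∀ a b : Option C, (G.w a b).cmp.holds (esub (v.toFun b) (v.toFun a)) (G.w a b).c }

/-- Weight of the path `a₀ → a₁ → ⋯ → aₙ` given as the list `[a₀, …, aₙ]`. -/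
def chainWeight (G : DGraph C) : List (Option C) → Weight
  | a :: b :: l => Weight.add (G.w a b) (G.chainWeight (b :: l))
  | _ => ⟨Cmp.le, 0⟩

end DGraph

/-- `l` is a path from `a` to `b`: at least one edge, consecutive vertices distinct. -/
def IsPath (l : List (Option C)) (a b : Option C) : Prop :=
  2 ≤ l.length ∧ l.head? = some a ∧ l.getLast? = some b ∧ l.Chain' (· ≠ ·)

namespace DGraph

/-- `𝔾` has a negative cycle: a cycle of weight strictly less than `(≤, 0)`. -/
def HasNegCycle (G : DGraph C) : Prop :=
  ∃ (a : Option C) (l : List (Option C)),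
    IsPath l a a ∧ Weight.lt (G.chainWeight l) ⟨Cmp.le, 0⟩

/-- `𝔾` is in standard form. -/
def Standard (G : DGraph C) (XF : Set C) : Prop :=
  (∀ x ∈ XF, Weight.le (G.w none (some x)) ⟨Cmp.le, 0⟩) ∧
  (∀ x : C, x ∉ XF → Weight.le (G.w (some x) none) ⟨Cmp.le, 0⟩) ∧
  (∀ x y : C, G.w (some x) (some y) ≠ ⟨Cmp.le, ⊤⟩ →
    G.w (some x) none ≠ ⟨Cmp.le, ⊤⟩ ∧ G.w none (some y) ≠ ⟨Cmp.le, ⊤⟩)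

/-- `𝔾` is normalized: standard form, no negative cycle, and every edge weight is
minimal among the weights of paths between its endpoints. -/
def Normalized (G : DGraph C) (XF : Set C) : Prop :=
  G.Standard XF ∧ ¬ G.HasNegCycle ∧
  ∀ (a b : Option C) (l : List (Option C)), a ≠ b → IsPath l a b →
    Weight.le (G.w a b) (G.chainWeight l)

/-- Weight function of the standardization of `𝔾`. -/
def stdW (G : DGraph C) (XF : Set C) : Option C → Option C → Weight
  | none, some y =>
      if y ∈ XF then Weight.min (G.w none (some y)) ⟨Cmp.le, 0⟩
      else if ∃ a : Option C, a ≠ some y ∧ G.w a (some y) ≠ ⟨Cmp.le, ⊤⟩ then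
        Weight.min (G.w none (some y)) ⟨Cmp.lt, ⊤⟩
      else G.w none (some y)
  | some x, none =>
      if x ∈ XF then
        (if ∃ b : Option C, b ≠ some x ∧ G.w (some x) b ≠ ⟨Cmp.le, ⊤⟩ then
          Weight.min (G.w (some x) none) ⟨Cmp.lt, ⊤⟩
        else G.w (some x) none)
      else Weight.min (G.w (some x) none) ⟨Cmp.le, 0⟩
  | a, b => G.w a b

/-- The standardization of a distance graph. -/
def standardize (G : DGraph C) (XF : Set C) : DGraph C where
  w := G.stdW XF
  refl' := fun a => by
    cases a with
    | none => exact G.refl' none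
    | some x => exact G.refl' (some x)

/-- Intersecting a distance graph with a single atomic constraint `y - x ◁ c`:
the weight of the edge `x → y` is replaced by `min(𝔾_{xy}, (◁, c))`. -/
def addAtom (G : DGraph C) (φ : Atom C) : DGraph C where
  w := fun a b =>
    if a = φ.x ∧ b = φ.y ∧ φ.x ≠ φ.y then
      Weight.min (G.w a b) ⟨φ.cmp, φ.c.toEReal⟩
    else G.w a b
  refl' := fun a => by
    have h : ¬ (a = φ.x ∧ a = φ.y ∧ φ.x ≠ φ.y) := by
      rintro ⟨h1, h2, h3⟩
      exact h3 (h1 ▸ h2 ▸ rfl)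
    show (if a = φ.x ∧ a = φ.y ∧ φ.x ≠ φ.y then
      Weight.min (G.w a a) ⟨φ.cmp, φ.c.toEReal⟩ else G.w a a) = ⟨Cmp.le, ⊤⟩
    rw [if_neg h]
    exact G.refl' a

/-- Intersecting a distance graph with a guard (list of atomic constraints). -/
def guardGraph (G : DGraph C) : List (Atom C) → DGraph C
  | [] => G
  | φ :: g => (G.guardGraph g).addAtom φ

/-- Edgewise minimum of two distance graphs. -/
def minG (G H : DGraph C) : DGraph C where
  w := fun a b => Weight.min (G.w a b) (H.w a b)
  refl' := fun a => by
    show Weight.min (G.w a a) (H.w a a) = _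
    rw [G.refl', H.refl']
    exact ite_self _

end DGraph

/-- The distance graph `𝔾_v^G`. -/
def upGraph (XF : Set C) (G : Set (Atom C)) (v : Val C XF) : DGraph C where
  w := fun a b =>
    match a, b with
    | some x, none =>
        if x ∈ XF then ⟨Cmp.le, -(v.toFun (some x))⟩
        else if ∃ φ ∈ G, φ.y = none ∧ φ.x = some x ∧ φ.c ≠ EConst.ninf ∧ ¬ asat v.toFun φ
          then ⟨Cmp.le, -(v.toFun (some x))⟩
        else ⟨Cmp.le, ⊤⟩
    | none, some y =>
        if y ∈ XF then ⟨Cmp.le, v.toFun (some y)⟩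
        else if ∃ φ ∈ G, φ.y = some y ∧ φ.x = none ∧ φ.c ≠ EConst.pinf ∧ asat v.toFun φ
          then ⟨Cmp.le, v.toFun (some y)⟩
        else ⟨Cmp.le, ⊤⟩
    | _, _ => ⟨Cmp.le, ⊤⟩
  refl' := fun a => by cases a <;> rfl

/-- The guard `g_v^G`: all constraints of `G` satisfied by `v`. -/
def upGuard (G : Set (Atom C)) (u : Option C → EReal) : Set (Atom C) :=
  { φ ∈ G | asat u φ }

/-- An atomic constraint is `M`-bounded. -/
def MBounded (M : ℕ) (φ : Atom C) : Prop :=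
  (∃ k : ℤ, φ.c = EConst.int k ∧ -(M : ℤ) ≤ k ∧ k ≤ (M : ℤ)) ∨
  (φ.cmp = Cmp.le ∧ φ.c = EConst.ninf) ∨ φ.c = EConst.pinf

/-- An atomic constraint is `M`-bounded integral (constant in `{-∞,+∞} ∪ [-M, M] ∩ ℤ`). -/
def MBoundedIntegral (M : ℕ) (φ : Atom C) : Prop :=
  (∃ k : ℤ, φ.c = EConst.int k ∧ -(M : ℤ) ≤ k ∧ k ≤ (M : ℤ)) ∨
  φ.c = EConst.ninf ∨ φ.c = EConst.pinf

/-- An atomic constraint is `X_D`-safe: if both endpoints are future clocks,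
they are in `X_D`. -/
def XDSafe (XF XD : Set C) (φ : Atom C) : Prop :=
  ∀ x y : C, φ.x = some x → φ.y = some y → x ∈ XF → y ∈ XF → x ∈ XD ∧ y ∈ XD

/-- Vertices in `X_F ∪ {0}`. -/
def futV (XF : Set C) : Option C → Prop
  | none => True
  | some x => x ∈ XF

/-- Vertices in `X_H ∪ {0}`. -/
def histV (XF : Set C) : Option C → Prop
  | none => True
  | some x => x ∉ XF

/-- The equivalence `v₁ ≃ v₂`: agreement on history clocks and on all
`(X_D, M)`-safe constraints over `X_F ∪ {0}`. -/
def simeqV (XF XD : Set C) (M : ℕ) (v₁ v₂ : Val C XF) : Prop :=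
  (∀ x : C, x ∉ XF → v₁.toFun (some x) = v₂.toFun (some x)) ∧
  ∀ φ : Atom C, XDSafe XF XD φ → MBounded M φ → futV XF φ.x → futV XF φ.y →
    (asat v₁.toFun φ ↔ asat v₂.toFun φ)

/-- `(X_D, M)`-safely reachable zones: obtained from the initial zone
`↑(𝕍 ∧ g₀)` (`g₀` fixing each history clock to `0` or `+∞`) by the
`(X_D, M)`-safe zone operations. -/
inductive SafeReach (XF XD : Set C) (M : ℕ) : Set (Val C XF) → Prop where
  | init (f : C → EReal) (hf : ∀ x : C, x ∉ XF → f x = 0 ∨ f x = ⊤) :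
      SafeReach XF XD M (elapseSet XF { v | ∀ x : C, x ∉ XF → v.toFun (some x) = f x })
  | guard {Z : Set (Val C XF)} (g : Set (Atom C))
      (hg : ∀ φ ∈ g, XDSafe XF XD φ ∧ MBounded M φ)
      (h : SafeReach XF XD M Z) :
      SafeReach XF XD M { v ∈ Z | ∀ φ ∈ g, asat v.toFun φ }
  | changeSimple {Z : Set (Val C XF)} (x : C) (hx : x ∉ XD) (h : SafeReach XF XD M Z) :
      SafeReach XF XD M (changeSet XF {x} Z)
  | changeD {Z : Set (Val C XF)} (x : C) (hx : x ∈ XD) (c : EReal) (hc : c = 0 ∨ c = ⊥)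
      (h : SafeReach XF XD M Z) :
      SafeReach XF XD M (changeSet XF {x} { v ∈ Z | v.toFun (some x) = c })
  | elapse {Z : Set (Val C XF)} (h : SafeReach XF XD M Z) :
      SafeReach XF XD M (elapseSet XF Z)

/-- `α ∼_K β` on `ℝ̄`. -/
def eqvK (K : ℕ) (α β : EReal) : Prop :=
  ∀ (cmp : Cmp) (c : EReal),
    (c = ⊥ ∨ c = ⊤ ∨ ∃ k : ℤ, c = ((k : ℝ) : EReal) ∧ |k| ≤ (K : ℤ)) →
    (cmp.holds α c ↔ cmp.holds β c)

/-- The equivalence `v ∼ⁿ_M v'` on valuations. -/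
def simVn (XF : Set C) (M n : ℕ) (v v' : Val C XF) : Prop :=
  (∀ x : C, eqvK (n * M) (v.toFun (some x)) (v'.toFun (some x))) ∧
  ∀ x y : C, eqvK ((n + 1) * M)
    (esub (v.toFun (some x)) (v.toFun (some y)))
    (esub (v'.toFun (some x)) (v'.toFun (some y)))

/-- The `(†)` conditions for a distance graph with bound `B` (usually `B = nM`). -/
def Dagger (XF : Set C) (B : ℕ) (G : DGraph C) : Prop :=
  (∀ x ∈ XF, (∃ b : Option C, histV XF b ∧ (G.w (some x) b).Finite) →
     Weight.le ⟨Cmp.le, 0⟩ (G.w (some x) none) ∧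
     Weight.le (G.w (some x) none) ⟨Cmp.le, ((B : ℝ) : EReal)⟩) ∧
  (∀ x ∈ XF, (G.w none (some x)).Finite →
     Weight.le ⟨Cmp.lt, ((-(B : ℝ) : ℝ) : EReal)⟩ (G.w none (some x)) ∧
     Weight.le (G.w none (some x)) ⟨Cmp.le, 0⟩) ∧
  (∀ x : C, x ∉ XF → ∀ y ∈ XF, (G.w none (some y)).Finite →
     Weight.le (Weight.add (G.w (some x) none) ⟨Cmp.lt, ((-(B : ℝ) : ℝ) : EReal)⟩)
       (G.w (some x) (some y))) ∧
  (∀ x ∈ XF, ∀ y ∈ XF, (G.w (some x) (some y)).Finite →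
     Weight.le ⟨Cmp.lt, ((-(B : ℝ) : ℝ) : EReal)⟩ (G.w (some x) (some y)) ∧
     Weight.le (G.w (some x) (some y)) ⟨Cmp.le, ((B : ℝ) : EReal)⟩)

end GTA

namespace GTA

/-! ### Auxiliary lemmas -/

section Aux

variable {C : Type*}

lemma eadd_top_left (b : EReal) : eadd ⊤ b = ⊤ := by simp [eadd]

lemma eadd_top_right (a : EReal) : eadd a ⊤ = ⊤ := by simp [eadd]

lemma esub_top_left (b : EReal) : esub ⊤ b = ⊤ := eadd_top_left _

lemma esub_bot_right (a : EReal) : esub a ⊥ = ⊤ := by simp [esub, eadd]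

lemma esub_top_right {a : EReal} (h : a ≠ ⊤) : esub a ⊤ = ⊥ := by
  simp [esub, eadd, h, EReal.neg_top, EReal.add_bot]

lemma esub_bot_left {b : EReal} (h : b ≠ ⊥) : esub ⊥ b = ⊥ := by
  have h' : -b ≠ ⊤ := fun hc => h (EReal.neg_eq_top_iff.mp hc)
  simp only [esub, eadd]
  rw [if_neg (by simp [h'])]
  exact EReal.bot_add _

lemma esub_coe (r s : ℝ) : esub (r : EReal) (s : EReal) = ((r - s : ℝ) : EReal) := by
  simp only [esub, eadd]
  rw [if_neg (by simp)]
  rw [show -((s:ℝ):EReal) = ((-s : ℝ) : EReal) from by exact_mod_cast (EReal.coe_neg s).symm]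
  rw [← EReal.coe_add]
  ring_nf

lemma eadd_coe_eq_top_iff {a : EReal} (δ : ℝ) : eadd a ((δ:ℝ):EReal) = ⊤ ↔ a = ⊤ := by
  constructor
  · intro h
    by_contra ha
    rcases eq_or_ne a ⊥ with hb | hb
    · subst hb
      simp only [eadd] at h
      rw [if_neg (by simp [ha])] at h
      rw [EReal.bot_add] at h
      exact bot_ne_top h
    · obtain ⟨r, hr⟩ : ∃ r : ℝ, a = r := ⟨a.toReal, (EReal.coe_toReal ha hb).symm⟩
      subst hr
      simp only [eadd] at h
      rw [if_neg (by simp), ← EReal.coe_add] at h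
      exact EReal.coe_ne_top _ h
  · intro h; subst h; exact eadd_top_left _

lemma holds_top_iff {cmp : Cmp} {c : EReal} (h : cmp.holds ⊤ c) : cmp = Cmp.le ∧ c = ⊤ := by
  cases cmp with
  | lt => exact absurd h (not_top_lt)
  | le => exact ⟨rfl, top_le_iff.mp h⟩

lemma holds_bot_of_ne {w : Weight} (h : w ≠ ⟨Cmp.lt, ⊥⟩) : w.cmp.holds ⊥ w.c := by
  rcases w with ⟨cmp, c⟩
  cases cmp with
  | lt =>
    have : c ≠ ⊥ := fun hc => h (by rw [hc])
    exact this.bot_lt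
  | le => exact bot_le

lemma weight_le_bot {w : Weight} (h : Weight.le w ⟨Cmp.le, ⊥⟩) :
    w = ⟨Cmp.le, ⊥⟩ ∨ w = ⟨Cmp.lt, ⊥⟩ := by
  rcases h with (h | ⟨h1, h2, h3⟩) | h
  · exact absurd h (not_lt_bot)
  · right; rcases w with ⟨cmp, c⟩; simp_all
  · left; exact h

lemma weight_le_ltTop {w : Weight} (h : w ≠ ⟨Cmp.le, ⊤⟩) : Weight.le w ⟨Cmp.lt, ⊤⟩ := by
  rcases w with ⟨cmp, c⟩
  rcases lt_or_eq_of_le (le_top : c ≤ ⊤) with hc | hc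
  · exact Or.inl (Or.inl hc)
  · subst hc
    cases cmp with
    | lt => exact Or.inr rfl
    | le => exact absurd rfl h

lemma not_top_le_zero : ¬ Weight.le (⟨Cmp.le, ⊤⟩ : Weight) ⟨Cmp.le, 0⟩ := by
  rintro ((h | ⟨h1, h2, h3⟩) | h)
  · exact absurd h (by simp [← EReal.coe_zero])
  · simp at h1
  · have := congrArg Weight.c h
    simp at this

lemma weight_c_ne_bot {w : Weight} (h1 : w ≠ ⟨Cmp.le, ⊥⟩) (h2 : w ≠ ⟨Cmp.lt, ⊥⟩) :
    w.c ≠ ⊥ := by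
  rcases w with ⟨cmp, c⟩
  cases cmp with
  | lt => intro hc; exact h2 (by rw [show c = ⊥ from hc])
  | le => intro hc; exact h1 (by rw [show c = ⊥ from hc])

lemma add_zero_right (w : Weight) : Weight.add w ⟨Cmp.le, 0⟩ = w := by
  have h1 : (⟨Cmp.le, 0⟩ : Weight) ≠ ⟨Cmp.lt, ⊥⟩ := by
    intro h; exact absurd (congrArg Weight.cmp h) (by simp)
  have h2 : (⟨Cmp.le, 0⟩ : Weight) ≠ ⟨Cmp.le, ⊤⟩ := by
    intro h; have := congrArg Weight.c h; simp at this
  have h3 : (⟨Cmp.le, 0⟩ : Weight) ≠ ⟨Cmp.le, ⊥⟩ := by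
    intro h; have := congrArg Weight.c h; simp at this
  have h4 : (⟨Cmp.le, 0⟩ : Weight) ≠ ⟨Cmp.lt, ⊤⟩ := by
    intro h; exact absurd (congrArg Weight.cmp h) (by simp)
  unfold Weight.add
  by_cases hw1 : w = ⟨Cmp.lt, ⊥⟩
  · rw [if_pos (Or.inl hw1)]; exact hw1.symm
  rw [if_neg (by rintro (h | h); exacts [hw1 h, h1 h])]
  by_cases hw2 : w = ⟨Cmp.le, ⊤⟩
  · rw [if_pos (Or.inl hw2)]; exact hw2.symm
  rw [if_neg (by rintro (h | h); exacts [hw2 h, h2 h])]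
  by_cases hw3 : w = ⟨Cmp.le, ⊥⟩
  · rw [if_pos (Or.inl hw3)]; exact hw3.symm
  rw [if_neg (by rintro (h | h); exacts [hw3 h, h3 h])]
  by_cases hw4 : w = ⟨Cmp.lt, ⊤⟩
  · rw [if_pos (Or.inl hw4)]; exact hw4.symm
  rw [if_neg (by rintro (h | h); exacts [hw4 h, h4 h])]
  rcases w with ⟨cmp, c⟩
  cases cmp with
  | lt =>
    rw [if_neg (by rintro ⟨h, -⟩; simp at h)]
    simp [add_zero]
  | le =>
    rw [if_pos ⟨rfl, rfl⟩]
    simp [add_zero]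

lemma add_bot_left {w : Weight} (h1 : w ≠ ⟨Cmp.lt, ⊥⟩) (h2 : w ≠ ⟨Cmp.le, ⊤⟩) :
    Weight.add ⟨Cmp.le, ⊥⟩ w = ⟨Cmp.le, ⊥⟩ := by
  unfold Weight.add
  rw [if_neg, if_neg, if_pos (Or.inl rfl)]
  · rintro (h | h)
    · have := congrArg Weight.c h; simp at this
    · exact h2 h
  · rintro (h | h)
    · exact absurd (congrArg Weight.cmp h) (by simp)
    · exact h1 h

lemma add_bot_right {w : Weight} (h1 : w ≠ ⟨Cmp.lt, ⊥⟩) (h2 : w ≠ ⟨Cmp.le, ⊤⟩) :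
    Weight.add w ⟨Cmp.le, ⊥⟩ = ⟨Cmp.le, ⊥⟩ := by
  unfold Weight.add
  rw [if_neg, if_neg, if_pos (Or.inr rfl)]
  · rintro (h | h)
    · exact h2 h
    · have := congrArg Weight.c h; simp at this
  · rintro (h | h)
    · exact h1 h
    · exact absurd (congrArg Weight.cmp h) (by simp)

lemma chainWeight_three (G : DGraph C) (a b c : Option C) :
    G.chainWeight [a, b, c] = Weight.add (G.w a b) (Weight.add (G.w b c) ⟨Cmp.le, 0⟩) := rfl

/-- From a valuation in the semantics with `v b = ⊤`, every edge into `b` is `(≤,⊤)`. -/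
lemma edge_into_top {G : DGraph C} {XF : Set C} {v : Val C XF} (hv : v ∈ G.sem XF)
    {b : Option C} (hb : v.toFun b = ⊤) (a : Option C) : G.w a b = ⟨Cmp.le, ⊤⟩ := by
  have h := hv a b
  rw [hb, esub_top_left] at h
  obtain ⟨h1, h2⟩ := holds_top_iff h
  rcases hw : G.w a b with ⟨cmp, c⟩
  rw [hw] at h1 h2
  simp only [Weight.mk.injEq]
  exact ⟨h1, h2⟩

/-- From a valuation in the semantics with `v a = ⊥`, every edge out of `a` is `(≤,⊤)`. -/
lemma edge_from_bot {G : DGraph C} {XF : Set C} {v : Val C XF} (hv : v ∈ G.sem XF)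
    {a : Option C} (ha : v.toFun a = ⊥) (b : Option C) : G.w a b = ⟨Cmp.le, ⊤⟩ := by
  have h := hv a b
  rw [ha, esub_bot_right] at h
  obtain ⟨h1, h2⟩ := holds_top_iff h
  rcases hw : G.w a b with ⟨cmp, c⟩
  rw [hw] at h1 h2
  simp only [Weight.mk.injEq]
  exact ⟨h1, h2⟩

/-- Analysis of an edge of weight `(≤,⊥)` at a valuation of the semantics. -/
lemma bot_edge_cases {G : DGraph C} {XF : Set C} {v : Val C XF} (hv : v ∈ G.sem XF)
    {a b : Option C} (h : G.w a b = ⟨Cmp.le, ⊥⟩) :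
    v.toFun b ≠ ⊤ ∧ v.toFun a ≠ ⊥ ∧ (v.toFun b = ⊥ ∨ v.toFun a = ⊤) := by
  have hc := hv a b
  rw [h] at hc
  change esub (v.toFun b) (v.toFun a) ≤ ⊥ at hc
  have hb : v.toFun b ≠ ⊤ := by
    intro hb; rw [hb, esub_top_left] at hc; exact top_ne_bot (le_bot_iff.mp hc)
  have ha : v.toFun a ≠ ⊥ := by
    intro ha; rw [ha, esub_bot_right] at hc; exact top_ne_bot (le_bot_iff.mp hc)
  refine ⟨hb, ha, ?_⟩
  by_contra hcon
  push_neg at hcon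
  obtain ⟨hb', ha'⟩ := hcon
  obtain ⟨r, hr⟩ : ∃ r : ℝ, v.toFun b = r := ⟨_, (EReal.coe_toReal hb hb').symm⟩
  obtain ⟨s, hs⟩ : ∃ s : ℝ, v.toFun a = s := ⟨_, (EReal.coe_toReal ha' ha).symm⟩
  rw [hr, hs, esub_coe] at hc
  exact EReal.coe_ne_bot _ (le_bot_iff.mp hc)

end Aux

/-- In a safely reachable zone, each history clock is uniformly `⊤` or uniformly not `⊤`. -/
lemma uniform_top {C : Type*} (XF XD : Set C) (hXD : XD ⊆ XF) (M : ℕ) (Z : Set (Val C XF))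
    (hZ : SafeReach XF XD M Z) :
    ∀ x : C, x ∉ XF →
      (∀ v ∈ Z, v.toFun (some x) = ⊤) ∨ (∀ v ∈ Z, v.toFun (some x) ≠ ⊤) := by
  induction hZ with
  | init f hf =>
    intro x hx
    rcases hf x hx with h0 | h0
    · right
      rintro w ⟨v, hv, δ, hδ, hw⟩
      have : w.toFun (some x) = eadd (v.toFun (some x)) ((δ:ℝ):EReal) := by rw [hw]; rfl
      rw [this, hv x hx, h0]
      intro hc
      exact EReal.coe_ne_top δ (by simpa [eadd, EReal.zero_ne_top] using hc)
    · left
      rintro w ⟨v, hv, δ, hδ, hw⟩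
      have : w.toFun (some x) = eadd (v.toFun (some x)) ((δ:ℝ):EReal) := by rw [hw]; rfl
      rw [this, hv x hx, h0, eadd_top_left]
  | guard g hg h ih =>
    intro x hx
    rcases ih x hx with h0 | h0
    · exact Or.inl fun v hv => h0 v hv.1
    · exact Or.inr fun v hv => h0 v hv.1
  | changeSimple x' hx' h ih =>
    intro x hx
    by_cases hxx : x = x'
    · subst hxx
      right
      rintro v' ⟨v, hv, hrel, hother⟩
      rw [hrel x rfl hx]
      simp
    · rcases ih x hx with h0 | h0
      · left
        rintro v' ⟨v, hv, hrel, hother⟩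
        rw [hother x (by simp [hxx])]
        exact h0 v hv
      · right
        rintro v' ⟨v, hv, hrel, hother⟩
        rw [hother x (by simp [hxx])]
        exact h0 v hv
  | changeD x' hx' c hc h ih =>
    intro x hx
    have hxx : x ≠ x' := fun hcon => hx (hcon ▸ hXD hx')
    rcases ih x hx with h0 | h0
    · left
      rintro v' ⟨v, hv, hrel, hother⟩
      rw [hother x (by simp [hxx])]
      exact h0 v hv.1
    · right
      rintro v' ⟨v, hv, hrel, hother⟩
      rw [hother x (by simp [hxx])]
      exact h0 v hv.1
  | elapse h ih =>
    intro x hx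
    rcases ih x hx with h0 | h0
    · left
      rintro w ⟨v, hv, δ, hδ, hw⟩
      have : w.toFun (some x) = eadd (v.toFun (some x)) ((δ:ℝ):EReal) := by rw [hw]; rfl
      rw [this, h0 v hv, eadd_top_left]
    · right
      rintro w ⟨v, hv, δ, hδ, hw⟩
      have : w.toFun (some x) = eadd (v.toFun (some x)) ((δ:ℝ):EReal) := by rw [hw]; rfl
      rw [this]
      intro hc
      exact h0 v hv ((eadd_coe_eq_top_iff δ).mp hc)

/-- Minimality over a 2-edge path whose first edge has weight `(≤,⊥)`. -/
lemma min_three {C : Type*} {XF : Set C} {G : DGraph C} (hWF : G.WF)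
    (hnorm : G.Normalized XF) {a b c : Option C} (hab : a ≠ b) (hbc : b ≠ c) (hac : a ≠ c)
    (h1 : G.w a b = ⟨Cmp.le, ⊥⟩) (h2 : G.w b c ≠ ⟨Cmp.le, ⊤⟩) :
    G.w a c = ⟨Cmp.le, ⊥⟩ := by
  have hpath : IsPath [a, b, c] a c := ⟨by simp, rfl, by simp, by simp [hab, hbc, List.Chain']⟩
  have hmin := hnorm.2.2 a c [a, b, c] hac hpath
  rw [chainWeight_three, add_zero_right, h1, add_bot_left (hWF b c) h2] at hmin
  rcases weight_le_bot hmin with h | h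
  · exact h
  · exact absurd h (hWF a c)

/-- Minimality over a 2-edge path whose second edge has weight `(≤,⊥)`. -/
lemma min_three' {C : Type*} {XF : Set C} {G : DGraph C} (hWF : G.WF)
    (hnorm : G.Normalized XF) {a b c : Option C} (hab : a ≠ b) (hbc : b ≠ c) (hac : a ≠ c)
    (h1 : G.w b c = ⟨Cmp.le, ⊥⟩) (h2 : G.w a b ≠ ⟨Cmp.le, ⊤⟩) :
    G.w a c = ⟨Cmp.le, ⊥⟩ := by
  have hpath : IsPath [a, b, c] a c := ⟨by simp, rfl, by simp, by simp [hab, hbc, List.Chain']⟩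
  have hmin := hnorm.2.2 a c [a, b, c] hac hpath
  rw [chainWeight_three, add_zero_right, h1, add_bot_right (hWF a b) h2] at hmin
  rcases weight_le_bot hmin with h | h
  · exact h
  · exact absurd h (hWF a c)

/-- If every valuation of the semantics has `v x ≠ ⊤` for a history clock `x`,
then `𝔾_{0x} ≠ (≤,⊤)`. -/
lemma tight_notTop {C : Type*} {XF : Set C} {G : DGraph C} (hWF : G.WF)
    (hnorm : G.Normalized XF) {x : C} (hxH : x ∉ XF)
    (hne : (G.sem XF).Nonempty)
    (hall : ∀ v ∈ G.sem XF, v.toFun (some x) ≠ ⊤)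
    (hcon : G.w none (some x) = ⟨Cmp.le, ⊤⟩) : False := by
  obtain ⟨v, hv⟩ := hne
  have hin : ∀ a : Option C, G.w a (some x) = ⟨Cmp.le, ⊤⟩ := by
    intro a
    cases a with
    | none => exact hcon
    | some z =>
      by_contra h
      exact (hnorm.1.2.2 z x h).2 hcon
  set f : Option C → EReal := fun e => if e = some x then ⊤ else v.toFun e with hf
  have hfx : f (some x) = ⊤ := by simp [hf]
  have hfe : ∀ e, e ≠ some x → f e = v.toFun e := fun e he => by simp [hf, he]
  have hzero : f none = 0 := by rw [hfe none (by simp)]; exact v.zero'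
  have hhist : ∀ z : C, z ∉ XF → 0 ≤ f (some z) := by
    intro z hz
    by_cases hzx : z = x
    · subst hzx; rw [hfx]; exact le_top
    · rw [hfe _ (by simp [hzx])]; exact v.hist' z hz
  have hfut : ∀ z : C, z ∈ XF → f (some z) ≤ 0 := by
    intro z hz
    have hzx : z ≠ x := fun h => hxH (h ▸ hz)
    rw [hfe _ (by simp [hzx])]; exact v.fut' z hz
  set v' : Val C XF := ⟨f, hzero, hhist, hfut⟩ with hv'
  have hv'sem : v' ∈ G.sem XF := by
    simp only [DGraph.sem, Set.mem_setOf_eq]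
    intro a e
    change (G.w a e).cmp.holds (esub (f e) (f a)) (G.w a e).c
    by_cases he : e = some x
    · subst he
      rw [hin a]
      exact le_top
    · rw [hfe e he]
      by_cases ha : a = some x
      · subst ha
        by_cases hue : v.toFun e = ⊤
        · rw [edge_into_top hv hue (some x)]
          exact le_top
        · have hb : esub (v.toFun e) (f (some x)) = ⊥ := by
            rw [hfx]
            exact esub_top_right hue
          rw [hb]
          exact holds_bot_of_ne (hWF _ _)
      · rw [hfe a ha]
        exact hv a e
  exact hall v' hv'sem hfx

/-- If every valuation of the semantics has `v x = ⊤` for a history clock `x`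
and the semantics is nonempty, then `𝔾_{x0} = (≤,⊥)`. -/
lemma tight_top {C : Type*} [Finite C] {XF : Set C} {G : DGraph C} (hWF : G.WF)
    (hnorm : G.Normalized XF) {x : C} (hxH : x ∉ XF)
    (hne : (G.sem XF).Nonempty)
    (hall : ∀ v ∈ G.sem XF, v.toFun (some x) = ⊤)
    (hcon : G.w (some x) none ≠ ⟨Cmp.le, ⊥⟩) : False := by
  obtain ⟨v, hv⟩ := hne
  have hvx : v.toFun (some x) = ⊤ := hall v hv
  set u := v.toFun with hu
  set Bad : Option C → Prop := fun e => G.w (some x) e = ⟨Cmp.le, ⊥⟩ ∧ u e ≠ ⊥ with hBadDef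
  have hBadnx : ∀ e, Bad e → e ≠ some x := by
    rintro e ⟨h1, -⟩ rfl
    rw [G.refl'] at h1
    exact absurd (congrArg Weight.c h1) (by simp)
  have hBadnn : ¬ Bad none := by
    rintro ⟨h1, -⟩; exact hcon h1
  have hBadOut : ∀ e, Bad e → ∀ d, G.w e d = ⟨Cmp.le, ⊤⟩ := by
    rintro e hBe d
    obtain ⟨b, rfl⟩ : ∃ b : C, e = some b := by
      cases e with
      | none => exact absurd hBe hBadnn
      | some b => exact ⟨b, rfl⟩
    have hb0 : G.w (some b) none = ⟨Cmp.le, ⊤⟩ := by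
      by_contra h
      exact hcon (min_three hWF hnorm (Ne.symm (hBadnx _ hBe)) (by simp) (by simp)
        hBe.1 h)
    cases d with
    | none => exact hb0
    | some z =>
      by_contra h
      exact (hnorm.1.2.2 b z h).1 hb0
  have hBadF : ∀ b : C, Bad (some b) → b ∈ XF := by
    intro b hBe
    by_contra hbH
    have h := hnorm.1.2.1 b hbH
    rw [hBadOut _ hBe none] at h
    exact not_top_le_zero h
  have : Finite (Option C) := by have := Fintype.ofFinite C; infer_instance
  obtain ⟨N0, hN0⟩ := Finite.exists_le
      (fun e : Option C => (u e).toReal - (G.w (some x) e).c.toReal)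
  set N : ℝ := max 0 (N0 + 1) with hN
  have hN0le : 0 ≤ N := le_max_left _ _
  have hkey : ∀ e : Option C, ∀ r s : ℝ, u e = (r : EReal) →
      (G.w (some x) e).c = (s : EReal) → r - N < s := by
    intro e r s hr hs
    have h := hN0 e
    rw [hr, hs] at h
    simp only [EReal.toReal_coe] at h
    have h2 : N0 + 1 ≤ N := le_max_right _ _
    linarith
  set f : Option C → EReal := fun e =>
    if e = some x then ((N : ℝ) : EReal) else if Bad e then ⊥ else u e with hfdef
  have hfx : f (some x) = ((N : ℝ) : EReal) := by simp [hfdef]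
  have hfBad : ∀ e, Bad e → f e = ⊥ := by
    intro e he
    simp only [hfdef]
    rw [if_neg (hBadnx e he), if_pos he]
  have hfother : ∀ e, e ≠ some x → ¬ Bad e → f e = u e := by
    intro e h1 h2
    simp only [hfdef]
    rw [if_neg h1, if_neg h2]
  have hzero : f none = 0 := by rw [hfother none (by simp) hBadnn]; exact v.zero'
  have hhist : ∀ z : C, z ∉ XF → 0 ≤ f (some z) := by
    intro z hz
    by_cases hzx : z = x
    · subst hzx; rw [hfx]; exact_mod_cast hN0le
    · have hnb : ¬ Bad (some z) := fun hb => hz (hBadF z hb)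
      rw [hfother _ (by simp [hzx]) hnb]
      exact v.hist' z hz
  have hfut : ∀ z : C, z ∈ XF → f (some z) ≤ 0 := by
    intro z hz
    have hzx : z ≠ x := fun h => hxH (h ▸ hz)
    by_cases hb : Bad (some z)
    · rw [hfBad _ hb]; exact bot_le
    · rw [hfother _ (by simp [hzx]) hb]; exact v.fut' z hz
  set v' : Val C XF := ⟨f, hzero, hhist, hfut⟩ with hv'
  have hv'sem : v' ∈ G.sem XF := by
    simp only [DGraph.sem, Set.mem_setOf_eq]
    intro a e
    change (G.w a e).cmp.holds (esub (f e) (f a)) (G.w a e).c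
    by_cases he1 : e = some x
    · subst he1
      rw [edge_into_top hv hvx a]
      exact le_top
    by_cases he2 : Bad e
    · rw [hfBad e he2]
      by_cases ha : f a = ⊥
      · have hw : G.w a e = ⟨Cmp.le, ⊤⟩ := by
          by_cases ha1 : a = some x
          · exfalso; rw [ha1, hfx] at ha; exact EReal.coe_ne_bot N ha
          by_cases ha2 : Bad a
          · exact hBadOut a ha2 e
          · rw [hfother a ha1 ha2] at ha
            exact edge_from_bot hv ha e
        rw [hw]
        exact le_top
      · rw [esub_bot_left ha]
        exact holds_bot_of_ne (hWF a e)
    rw [hfother e he1 he2]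
    by_cases ha1 : a = some x
    · subst ha1
      rw [hfx]
      by_cases hue : u e = ⊤
      · rw [edge_into_top hv hue (some x)]
        exact le_top
      by_cases hue' : u e = ⊥
      · rw [hue', esub_bot_left (EReal.coe_ne_bot N)]
        exact holds_bot_of_ne (hWF _ _)
      · obtain ⟨r, hr⟩ : ∃ r : ℝ, u e = r := ⟨_, (EReal.coe_toReal hue hue').symm⟩
        have hwne : G.w (some x) e ≠ ⟨Cmp.le, ⊥⟩ := fun hw => he2 ⟨hw, hue'⟩
        have hcne : (G.w (some x) e).c ≠ ⊥ := weight_c_ne_bot hwne (hWF _ _)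
        rw [hr, esub_coe]
        by_cases hct : (G.w (some x) e).c = ⊤
        · rw [hct]
          cases hcm : (G.w (some x) e).cmp with
          | lt => exact EReal.coe_lt_top _
          | le => exact le_top
        · obtain ⟨s, hs⟩ : ∃ s : ℝ, (G.w (some x) e).c = s :=
            ⟨_, (EReal.coe_toReal hct hcne).symm⟩
          have hlt : r - N < s := hkey e r s hr hs
          rw [hs]
          cases hcm : (G.w (some x) e).cmp with
          | lt => exact EReal.coe_lt_coe_iff.mpr hlt
          | le => exact le_of_lt (EReal.coe_lt_coe_iff.mpr hlt)
    by_cases ha2 : Bad a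
    · rw [hBadOut a ha2 e]
      exact le_top
    · rw [hfother a ha1 ha2]
      exact hv a e
  have hfinal := hall v' hv'sem
  exact EReal.coe_ne_top N (hfx.symm.trans hfinal)

/-- If every valuation of the semantics has `v y = ⊥` for a future clock `y`
and the semantics is nonempty, then `𝔾_{0y} = (≤,⊥)`. -/
lemma tight_bot {C : Type*} [Finite C] {XF : Set C} {G : DGraph C} (hWF : G.WF)
    (hnorm : G.Normalized XF) {y : C} (hyF : y ∈ XF)
    (hne : (G.sem XF).Nonempty)
    (hall : ∀ v ∈ G.sem XF, v.toFun (some y) = ⊥)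
    (hcon : G.w none (some y) ≠ ⟨Cmp.le, ⊥⟩) : False := by
  obtain ⟨v, hv⟩ := hne
  have hvy : v.toFun (some y) = ⊥ := hall v hv
  set u := v.toFun with hu
  have hOutY : ∀ d, G.w (some y) d = ⟨Cmp.le, ⊤⟩ := edge_from_bot hv hvy
  set Bad : Option C → Prop := fun a => G.w a (some y) = ⟨Cmp.le, ⊥⟩ ∧ u a ≠ ⊤ with hBadDef
  have hBadny : ∀ a, Bad a → a ≠ some y := by
    rintro a ⟨h1, -⟩ rfl
    rw [G.refl'] at h1
    exact absurd (congrArg Weight.c h1) (by simp)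
  have hBadnn : ¬ Bad none := fun h => hcon h.1
  have hBadBot : ∀ a, Bad a → u a ≠ ⊥ := fun a h => (bot_edge_cases hv h.1).2.1
  have hBadIn : ∀ a, Bad a → ∀ d, G.w d a = ⟨Cmp.le, ⊤⟩ := by
    rintro a hBa d
    obtain ⟨b, rfl⟩ : ∃ b : C, a = some b := by
      cases a with
      | none => exact absurd hBa hBadnn
      | some b => exact ⟨b, rfl⟩
    have h0a : G.w none (some b) = ⟨Cmp.le, ⊤⟩ := by
      by_contra h
      exact hcon (min_three' hWF hnorm (by simp) (hBadny _ hBa) (by simp) hBa.1 h)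
    cases d with
    | none => exact h0a
    | some z =>
      by_contra h
      exact (hnorm.1.2.2 z b h).2 h0a
  have hBadH : ∀ b : C, Bad (some b) → b ∉ XF := by
    intro b hBb hbF
    have h := hnorm.1.1 b hbF
    rw [hBadIn _ hBb none] at h
    exact not_top_le_zero h
  have : Finite (Option C) := by have := Fintype.ofFinite C; infer_instance
  obtain ⟨N0, hN0⟩ := Finite.exists_le
      (fun a : Option C => -(G.w a (some y)).c.toReal - (u a).toReal)
  set N : ℝ := max 0 (N0 + 1) with hN
  have hN0le : 0 ≤ N := le_max_left _ _
  have hkey : ∀ a : Option C, ∀ r s : ℝ, u a = (r : EReal) →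
      (G.w a (some y)).c = (s : EReal) → -N - r < s := by
    intro a r s hr hs
    have h := hN0 a
    rw [hr, hs] at h
    simp only [EReal.toReal_coe] at h
    have h2 : N0 + 1 ≤ N := le_max_right _ _
    linarith
  set f : Option C → EReal := fun e =>
    if e = some y then ((-N : ℝ) : EReal) else if Bad e then ⊤ else u e with hfdef
  have hfy : f (some y) = ((-N : ℝ) : EReal) := by simp [hfdef]
  have hfBad : ∀ e, Bad e → f e = ⊤ := by
    intro e he
    simp only [hfdef]
    rw [if_neg (hBadny e he), if_pos he]
  have hfother : ∀ e, e ≠ some y → ¬ Bad e → f e = u e := by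
    intro e h1 h2
    simp only [hfdef]
    rw [if_neg h1, if_neg h2]
  have hzero : f none = 0 := by rw [hfother none (by simp) hBadnn]; exact v.zero'
  have hhist : ∀ z : C, z ∉ XF → 0 ≤ f (some z) := by
    intro z hz
    have hzy : z ≠ y := fun h => hz (h ▸ hyF)
    by_cases hb : Bad (some z)
    · rw [hfBad _ hb]; exact le_top
    · rw [hfother _ (by simp [hzy]) hb]; exact v.hist' z hz
  have hfut : ∀ z : C, z ∈ XF → f (some z) ≤ 0 := by
    intro z hz
    by_cases hzy : z = y
    · subst hzy; rw [hfy]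
      exact_mod_cast neg_nonpos.mpr hN0le
    · have hnb : ¬ Bad (some z) := fun hb => hBadH z hb hz
      rw [hfother _ (by simp [hzy]) hnb]
      exact v.fut' z hz
  set v' : Val C XF := ⟨f, hzero, hhist, hfut⟩ with hv'
  have hv'sem : v' ∈ G.sem XF := by
    simp only [DGraph.sem, Set.mem_setOf_eq]
    intro a e
    change (G.w a e).cmp.holds (esub (f e) (f a)) (G.w a e).c
    by_cases ha1 : a = some y
    · subst ha1
      rw [hOutY e]
      exact le_top
    by_cases ha2 : Bad a
    · rw [hfBad a ha2]
      by_cases he : f e = ⊤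
      · have hw : G.w a e = ⟨Cmp.le, ⊤⟩ := by
          by_cases he1 : e = some y
          · exfalso; rw [he1, hfy] at he; exact EReal.coe_ne_top _ he
          by_cases he2 : Bad e
          · exact hBadIn e he2 a
          · rw [hfother e he1 he2] at he
            exact edge_into_top hv he a
        rw [hw]
        exact le_top
      · rw [esub_top_right he]
        exact holds_bot_of_ne (hWF a e)
    rw [hfother a ha1 ha2]
    by_cases he1 : e = some y
    · subst he1
      rw [hfy]
      by_cases hua : u a = ⊥
      · rw [edge_from_bot hv hua (some y)]
        exact le_top
      by_cases hua' : u a = ⊤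
      · rw [hua', esub_top_right (EReal.coe_ne_top _)]
        exact holds_bot_of_ne (hWF _ _)
      · obtain ⟨r, hr⟩ : ∃ r : ℝ, u a = r := ⟨_, (EReal.coe_toReal hua' hua).symm⟩
        have hwne : G.w a (some y) ≠ ⟨Cmp.le, ⊥⟩ := fun hw => ha2 ⟨hw, hua'⟩
        have hcne : (G.w a (some y)).c ≠ ⊥ := weight_c_ne_bot hwne (hWF _ _)
        rw [hr, esub_coe]
        by_cases hct : (G.w a (some y)).c = ⊤
        · rw [hct]
          cases hcm : (G.w a (some y)).cmp with
          | lt => exact EReal.coe_lt_top _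
          | le => exact le_top
        · obtain ⟨s, hs⟩ : ∃ s : ℝ, (G.w a (some y)).c = s :=
            ⟨_, (EReal.coe_toReal hct hcne).symm⟩
          have hlt : -N - r < s := hkey a r s hr hs
          rw [hs]
          cases hcm : (G.w a (some y)).cmp with
          | lt => exact EReal.coe_lt_coe_iff.mpr hlt
          | le => exact le_of_lt (EReal.coe_lt_coe_iff.mpr hlt)
    by_cases he2 : Bad e
    · rw [hBadIn e he2 a]
      exact le_top
    · rw [hfother e he1 he2]
      exact hv a e
  exact EReal.coe_ne_bot (-N) (hfy.symm.trans (hall v' hv'sem))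

/-- properties of the canonical distance graph of a nonempty safely
reachable zone. -/
theorem reachable_properties {C : Type*} [Finite C] (XF XD : Set C) (hXD : XD ⊆ XF)
    (M : ℕ) (Z : Set (Val C XF)) (hZ : SafeReach XF XD M Z) (hne : Z.Nonempty)
    (G : DGraph C) (hWF : G.WF) (hnorm : G.Normalized XF) (hsem : G.sem XF = Z) :
    (∀ x : C, x ∉ XF →
      G.w (some x) none = ⟨Cmp.le, ⊥⟩ ∨ Weight.le (G.w none (some x)) ⟨Cmp.lt, ⊤⟩) ∧
    (∀ x y : C, G.w (some x) (some y) = ⟨Cmp.le, ⊥⟩ →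
      G.w (some x) none = ⟨Cmp.le, ⊥⟩ ∨ G.w none (some y) = ⟨Cmp.le, ⊥⟩) := by
  subst hsem
  have hUnif := uniform_top XF XD hXD M _ hZ
  constructor
  · intro x hx
    rcases hUnif x hx with h | h
    · left
      by_contra hcon
      exact tight_top hWF hnorm hx hne h hcon
    · right
      apply weight_le_ltTop
      intro hcon
      exact tight_notTop hWF hnorm hx hne h hcon
  · intro x y hxy
    by_cases hyF : y ∈ XF
    · by_cases hxF : x ∈ XF
      · right
        by_contra hcon
        apply tight_bot hWF hnorm hyF hne _ hcon
        intro v hv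
        obtain ⟨hb1, hb2, hb3⟩ := bot_edge_cases hv hxy
        rcases hb3 with h | h
        · exact h
        · have h2 := v.fut' x hxF
          rw [h] at h2
          exact absurd (top_le_iff.mp h2) (by simp)
      · rcases hUnif x hxF with h | h
        · left
          by_contra hcon
          exact tight_top hWF hnorm hxF hne h hcon
        · right
          by_contra hcon
          apply tight_bot hWF hnorm hyF hne _ hcon
          intro v hv
          obtain ⟨hb1, hb2, hb3⟩ := bot_edge_cases hv hxy
          rcases hb3 with h' | h'
          · exact h'
          · exact absurd h' (h v hv)
    · have hallx : ∀ v ∈ G.sem XF, v.toFun (some x) = ⊤ := by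
        intro v hv
        obtain ⟨hb1, hb2, hb3⟩ := bot_edge_cases hv hxy
        rcases hb3 with h' | h'
        · have h2 := v.hist' y hyF
          rw [h'] at h2
          exact absurd (le_bot_iff.mp h2) (by simp)
        · exact h'
      have hxH : x ∉ XF := by
        obtain ⟨v, hv⟩ := hne
        intro hxF
        have h2 := v.fut' x hxF
        rw [hallx v hv] at h2
        exact absurd (top_le_iff.mp h2) (by simp)
      left
      by_contra hcon
      exact tight_top hWF hnorm hxH hne hallx hcon

end GTA
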